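/- Let M be a 2×2 integer matrix with determinant 1 and all entries positive, and suppose t > 1 and p, q, u, v > 0 are real numbers with M·(p, q)ᵀ = t·(p, q)ᵀ and M·(−u, v)ᵀ = t⁻¹·(−u, v)ᵀ. Then there exists a constant c > 0 such that for all integers a, b not both zero, |b·v − a·u| · |a·p + b·q| ≥ c. Consequently, for every n ∈ ℤ and all natural numbers a, b not both zero, |t^{−n}·(b·v − a·u)| ≥ c / (tⁿ·(a·p + b·q)). -/
import Mathlib

/-- Auxiliary: the integer quadratic form `-B a² + (A-D) a b + C b²` attached to a
hyperbolic `SL₂(ℤ)` matrix with trace at least `3` never vanishes on nonzero vectors. -/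
lemma cascade_form_ne_zero (A B C D : ℤ) (hBpos : 0 < B) (hCpos : 0 < C)
    (hdet : A * D - B * C = 1) (htr : 3 ≤ A + D) (a b : ℤ) (hab : ¬(a = 0 ∧ b = 0)) :
    -B * a ^ 2 + (A - D) * a * b + C * b ^ 2 ≠ 0 := by
  intro hF0
  rcases eq_or_ne b 0 with hb | hb
  · subst hb
    have ha : a ≠ 0 := by tauto
    have ha2 : 0 < a ^ 2 := by positivity
    nlinarith [hF0, hBpos, ha2]
  · have hsq : (2 * B * a - (A - D) * b) ^ 2 = ((A + D) ^ 2 - 4) * b ^ 2 := by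
      linear_combination (-4 * B) * hF0 + (-4 * b ^ 2) * hdet
    have hdvd : b ∣ (2 * B * a - (A - D) * b) := by
      have h2 : b ^ 2 ∣ (2 * B * a - (A - D) * b) ^ 2 :=
        ⟨(A + D) ^ 2 - 4, by linear_combination hsq⟩
      exact (Int.pow_dvd_pow_iff two_ne_zero).mp h2
    obtain ⟨k, hk⟩ := hdvd
    have hk2 : k ^ 2 = (A + D) ^ 2 - 4 := by
      have hb2 : (b:ℤ) ^ 2 ≠ 0 := pow_ne_zero _ hb
      have h3 : b ^ 2 * k ^ 2 = b ^ 2 * ((A + D) ^ 2 - 4) := by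
        rw [hk] at hsq; linear_combination hsq
      exact mul_left_cancel₀ hb2 h3
    have habs : |k| ^ 2 = (A + D) ^ 2 - 4 := by rw [sq_abs]; exact hk2
    have hx0 : 0 ≤ |k| := abs_nonneg k
    have h1 : |k| < A + D := by
      refine lt_of_pow_lt_pow_left₀ 2 (by omega) ?_
      rw [habs]; linarith
    have h2 : A + D - 1 < |k| := by
      by_contra hcon
      push_neg at hcon
      have h3 : |k| ^ 2 ≤ (A + D - 1) ^ 2 := pow_le_pow_left₀ hx0 hcon 2
      rw [habs] at h3
      nlinarith [htr]
    omega

/-- Auxiliary: the scalar-equation version of proper discontinuity. -/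
lemma cascade_lower_bound (A B C D : ℤ)
    (hApos : 0 < A) (hBpos : 0 < B) (hCpos : 0 < C) (hDpos : 0 < D)
    (hdet : A * D - B * C = 1)
    (t p q u v : ℝ) (ht : 1 < t)
    (hp : 0 < p) (hq : 0 < q) (hu : 0 < u) (hv : 0 < v)
    (e1 : (A:ℝ) * p + (B:ℝ) * q = t * p)
    (e2 : (C:ℝ) * p + (D:ℝ) * q = t * q)
    (e3 : (A:ℝ) * (-u) + (B:ℝ) * v = t⁻¹ * (-u)) :
    ∀ a b : ℤ, ¬(a = 0 ∧ b = 0) →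
      p * u / B ≤ |(b : ℝ) * v - (a : ℝ) * u| * |(a : ℝ) * p + (b : ℝ) * q| := by
  have ht0 : (0:ℝ) < t := lt_trans one_pos ht
  have htne : t ≠ 0 := ne_of_gt ht0
  have hBR : (0:ℝ) < (B:ℝ) := by exact_mod_cast hBpos
  have hdetR : (A:ℝ) * D - B * C = 1 := by exact_mod_cast hdet
  have e1' : (B:ℝ) * q = (t - A) * p := by linarith
  have e3' : t * ((B:ℝ) * v) = (t * A - 1) * u := by
    have h := e3
    field_simp at h
    nlinarith [h]
  have hchar : t ^ 2 - ((A:ℝ) + D) * t + 1 = 0 := by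
    have h2 : (B:ℝ) * ((C:ℝ) * p) = (t - (D:ℝ)) * ((B:ℝ) * q) := by
      linear_combination (B:ℝ) * e2
    have h3 : (B:ℝ) * C * p = ((t - D) * (t - A)) * p := by
      rw [e1'] at h2; linarith [h2]
    have h4 : (B:ℝ) * C = (t - D) * (t - A) := mul_right_cancel₀ (ne_of_gt hp) h3
    nlinarith [h4, hdetR]
  have hBC : (t - (A:ℝ)) * (t * A - 1) = t * ((B:ℝ) * C) := by
    linear_combination (A:ℝ) * hchar + t * hdetR
  have key2 : (B:ℝ) * (q * v) = (C:ℝ) * (p * u) := by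
    have h : (t * B) * ((B:ℝ) * (q * v)) = (t * B) * ((C:ℝ) * (p * u)) := by
      linear_combination (t * (B:ℝ) * v) * e1' + ((t - (A:ℝ)) * p) * e3' + (p * u) * hBC
    exact mul_left_cancel₀ (by positivity) h
  have key3 : (B:ℝ) * (p * v - q * u) = ((A:ℝ) - D) * (p * u) := by
    have h : t * ((B:ℝ) * (p * v - q * u)) = t * (((A:ℝ) - D) * (p * u)) := by
      linear_combination p * e3' - (t * u) * e1' - (p * u) * hchar
    exact mul_left_cancel₀ htne h
  have htr2 : (2:ℝ) < (A:ℝ) + D := by nlinarith [sq_nonneg (t - 1)]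
  have htrZ : 3 ≤ A + D := by
    have : (2:ℤ) < A + D := by exact_mod_cast htr2
    omega
  intro a b hab
  have hF := cascade_form_ne_zero A B C D hBpos hCpos hdet htrZ a b hab
  have hF1 : (1:ℝ) ≤ |((-B * a ^ 2 + (A - D) * a * b + C * b ^ 2 : ℤ) : ℝ)| := by
    rw [← Int.cast_abs]
    exact_mod_cast Int.one_le_abs hF
  have hiden : ((b:ℝ) * v - a * u) * ((a:ℝ) * p + b * q)
      = (p * u / B) * ((-B * a ^ 2 + (A - D) * a * b + C * b ^ 2 : ℤ) : ℝ) := by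
    rw [div_mul_eq_mul_div, eq_div_iff (ne_of_gt hBR)]
    push_cast
    linear_combination ((a:ℝ) * b) * key3 + ((b:ℝ) * b) * key2
  calc p * u / B = (p * u / B) * 1 := by ring
    _ ≤ (p * u / B) * |((-B * a ^ 2 + (A - D) * a * b + C * b ^ 2 : ℤ) : ℝ)| :=
        mul_le_mul_of_nonneg_left hF1 (by positivity)
    _ = |(p * u / B) * ((-B * a ^ 2 + (A - D) * a * b + C * b ^ 2 : ℤ) : ℝ)| := by
        rw [abs_mul, abs_of_pos (by positivity : (0:ℝ) < p * u / B)]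
    _ = |((b:ℝ) * v - a * u) * ((a:ℝ) * p + b * q)| := by rw [hiden]
    _ = |(b:ℝ) * v - a * u| * |(a:ℝ) * p + b * q| := abs_mul _ _

/-- Auxiliary: deduce the second (rescaled) inequality from the uniform lower bound. -/
lemma cascade_second_bound (c t p q u v : ℝ) (ht : 1 < t)
    (hp : 0 < p) (hq : 0 < q)
    (hmain : ∀ a b : ℤ, ¬(a = 0 ∧ b = 0) →
      c ≤ |(b : ℝ) * v - (a : ℝ) * u| * |(a : ℝ) * p + (b : ℝ) * q|) :
    ∀ n : ℤ, ∀ a b : ℕ, ¬(a = 0 ∧ b = 0) →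
      c / (t ^ n * ((a : ℝ) * p + (b : ℝ) * q)) ≤
        |t ^ (-n) * ((b : ℝ) * v - (a : ℝ) * u)| := by
  have ht0 : (0:ℝ) < t := lt_trans one_pos ht
  have htne : t ≠ 0 := ne_of_gt ht0
  intro n a b hab
  have hab' : ¬((a:ℤ) = 0 ∧ (b:ℤ) = 0) := by
    simpa [Int.natCast_eq_zero] using hab
  have h1 := hmain (a:ℤ) (b:ℤ) hab'
  push_cast at h1
  have ha0 : (0:ℝ) ≤ (a:ℝ) := Nat.cast_nonneg a
  have hb0 : (0:ℝ) ≤ (b:ℝ) := Nat.cast_nonneg b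
  have hN : 0 < (a:ℝ) * p + (b:ℝ) * q := by
    rcases Nat.eq_zero_or_pos a with ha | ha
    · have hb1 : 1 ≤ b := Nat.one_le_iff_ne_zero.mpr (by tauto)
      have hb1' : (1:ℝ) ≤ (b:ℝ) := by exact_mod_cast hb1
      have ha' : (a:ℝ) = 0 := by exact_mod_cast ha
      rw [ha']
      nlinarith
    · have ha1 : (1:ℝ) ≤ (a:ℝ) := by exact_mod_cast ha
      nlinarith
  have htn : (0:ℝ) < t ^ n := zpow_pos ht0 n
  have htn' : (0:ℝ) < t ^ (-n) := zpow_pos ht0 (-n)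
  have hz : t ^ (-n) * t ^ n = 1 := by
    rw [← zpow_add₀ htne]; simp
  rw [abs_mul, abs_of_pos htn', div_le_iff₀ (by positivity)]
  have hre : t ^ (-n) * |(b:ℝ) * v - (a:ℝ) * u| * (t ^ n * ((a:ℝ) * p + (b:ℝ) * q))
      = |(b:ℝ) * v - (a:ℝ) * u| * ((a:ℝ) * p + (b:ℝ) * q) := by
    calc t ^ (-n) * |(b:ℝ) * v - (a:ℝ) * u| * (t ^ n * ((a:ℝ) * p + (b:ℝ) * q))
        = (t ^ (-n) * t ^ n) * (|(b:ℝ) * v - (a:ℝ) * u| * ((a:ℝ) * p + (b:ℝ) * q)) := by ring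
      _ = |(b:ℝ) * v - (a:ℝ) * u| * ((a:ℝ) * p + (b:ℝ) * q) := by rw [hz, one_mul]
  rw [hre, ← abs_of_pos hN]
  exact h1

/-- Proper discontinuity of the cascade of translations: if the integer matrix `M` has
determinant `1`, positive entries, eigenvalue `t > 1` with positive eigenvector `(p, q)`
and eigenvalue `t⁻¹` with eigenvector `(−u, v)`, then the product
`|b·v − a·u| · |a·p + b·q|` is uniformly bounded below over nonzero integer vectors
`(a, b)`; consequently `|t^{−n}(b·v − a·u)| ≥ c / (tⁿ(a·p + b·q))`. -/
theorem proper_discontinuity_of_cascade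
    (M : Matrix (Fin 2) (Fin 2) ℤ) (hdet : M.det = 1) (hpos : ∀ i j, 0 < M i j)
    (t p q u v : ℝ) (ht : 1 < t)
    (hp : 0 < p) (hq : 0 < q) (hu : 0 < u) (hv : 0 < v)
    (heig₁ : (M.map (Int.cast : ℤ → ℝ)).mulVec ![p, q] = t • ![p, q])
    (heig₂ : (M.map (Int.cast : ℤ → ℝ)).mulVec ![-u, v] = t⁻¹ • ![-u, v]) :
    ∃ c : ℝ, 0 < c ∧
      (∀ a b : ℤ, ¬(a = 0 ∧ b = 0) →
        c ≤ |(b : ℝ) * v - (a : ℝ) * u| * |(a : ℝ) * p + (b : ℝ) * q|) ∧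
      (∀ n : ℤ, ∀ a b : ℕ, ¬(a = 0 ∧ b = 0) →
        c / (t ^ n * ((a : ℝ) * p + (b : ℝ) * q)) ≤
          |t ^ (-n) * ((b : ℝ) * v - (a : ℝ) * u)|) := by
  have hdet' : M 0 0 * M 1 1 - M 0 1 * M 1 0 = 1 := by
    have := hdet
    rw [Matrix.det_fin_two] at this
    exact this
  have e1 : ((M 0 0 : ℤ):ℝ) * p + ((M 0 1 : ℤ):ℝ) * q = t * p := by
    have h := congrFun heig₁ 0
    simpa [Matrix.mulVec, dotProduct, Fin.sum_univ_two, Matrix.map_apply] using h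
  have e2 : ((M 1 0 : ℤ):ℝ) * p + ((M 1 1 : ℤ):ℝ) * q = t * q := by
    have h := congrFun heig₁ 1
    simpa [Matrix.mulVec, dotProduct, Fin.sum_univ_two, Matrix.map_apply] using h
  have e3 : ((M 0 0 : ℤ):ℝ) * (-u) + ((M 0 1 : ℤ):ℝ) * v = t⁻¹ * (-u) := by
    have h := congrFun heig₂ 0
    simpa [Matrix.mulVec, dotProduct, Fin.sum_univ_two, Matrix.map_apply] using h
  have hmain := cascade_lower_bound (M 0 0) (M 0 1) (M 1 0) (M 1 1)
    (hpos 0 0) (hpos 0 1) (hpos 1 0) (hpos 1 1) hdet' t p q u v ht hp hq hu hv e1 e2 e3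
  have hBR : (0:ℝ) < ((M 0 1 : ℤ):ℝ) := by exact_mod_cast hpos 0 1
  exact ⟨p * u / (M 0 1 : ℤ), by positivity, hmain,
    cascade_second_bound _ t p q u v ht hp hq hmain⟩
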